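/- Fix L > 2 and k > 0. Let q, r, s be the unique positive roots of x^L − x^{L-1} − k, x^L − x^{L-1} − (k+1), and x^L − x^{L-1} − (k+2) respectively (so 1 < q < r < s). Then r − q > s − r. -/

import Mathlib

open Set

lemma fderiv_aux1 (m : ℕ) (x : ℝ) :
    HasDerivAt (fun x : ℝ => x ^ (m + 3) - x ^ (m + 2))
      ((m + 3) * x ^ (m + 2) - (m + 2) * x ^ (m + 1)) x := by
  have h1 := hasDerivAt_pow (m + 3) x
  have h2 := hasDerivAt_pow (m + 2) x
  have := h1.sub h2
  norm_num at this
  convert this using 2 <;> push_cast [Pi.sub_apply] <;> rfl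

lemma fderiv_aux2 (m : ℕ) (x : ℝ) :
    HasDerivAt (fun x : ℝ => ((m : ℝ) + 3) * x ^ (m + 2) - ((m : ℝ) + 2) * x ^ (m + 1))
      ((m + 3) * ((m + 2) * x ^ (m + 1)) - (m + 2) * ((m + 1) * x ^ m)) x := by
  have h1 := (hasDerivAt_pow (m + 2) x).const_mul ((m : ℝ) + 3)
  have h2 := (hasDerivAt_pow (m + 1) x).const_mul ((m : ℝ) + 2)
  have := h1.sub h2
  norm_num at this
  convert this using 2 <;> push_cast [Pi.sub_apply] <;> rfl

theorem root_gaps_strictly_decreasing (L k : ℕ) (hL : 2 < L) (hk : 0 < k)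
    (q r s : ℝ) (hq : 0 < q) (hqroot : q ^ L = q ^ (L - 1) + k)
    (hr : 0 < r) (hrroot : r ^ L = r ^ (L - 1) + (k + 1))
    (hs : 0 < s) (hsroot : s ^ L = s ^ (L - 1) + (k + 2)) :
    r - q > s - r := by
  obtain ⟨m, rfl⟩ : ∃ m, L = m + 3 := ⟨L - 3, by omega⟩
  have hsub : (m + 3) - 1 = m + 2 := rfl
  rw [hsub] at hqroot hrroot hsroot
  set f : ℝ → ℝ := fun x => x ^ (m + 3) - x ^ (m + 2) with hf
  have hk1 : (1 : ℝ) ≤ (k : ℝ) := by exact_mod_cast hk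
  have hfq : f q = k := by simp only [hf]; linarith
  have hfr : f r = k + 1 := by simp only [hf]; linarith
  have hfs : f s = k + 2 := by simp only [hf]; linarith
  -- each root exceeds 1
  have hgt : ∀ x : ℝ, 0 < x → (k : ℝ) ≤ f x → 1 < x := by
    intro x hx hfx
    by_contra h
    push_neg at h
    have hp : 0 < x ^ (m + 2) := pow_pos hx _
    have hps : x ^ (m + 3) = x ^ (m + 2) * x := by rw [pow_succ]
    have : x ^ (m + 2) * x ≤ x ^ (m + 2) * 1 := by
      apply mul_le_mul_of_nonneg_left h (le_of_lt hp)
    simp only [hf] at hfx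
    nlinarith
  have h1q : 1 < q := hgt q hq (by rw [hfq])
  have h1r : 1 < r := hgt r hr (by rw [hfr]; linarith)
  have h1s : 1 < s := hgt s hs (by rw [hfs]; linarith)
  have hqmem : q ∈ Ici (1 : ℝ) := le_of_lt h1q
  have hrmem : r ∈ Ici (1 : ℝ) := le_of_lt h1r
  have hsmem : s ∈ Ici (1 : ℝ) := le_of_lt h1s
  have hcont : ContinuousOn f (Ici (1 : ℝ)) := by fun_prop
  have hderiv : deriv f = fun x : ℝ =>
      ((m : ℝ) + 3) * x ^ (m + 2) - ((m : ℝ) + 2) * x ^ (m + 1) := by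
    funext x
    exact (fderiv_aux1 m x).deriv
  -- strict monotonicity on [1, ∞)
  have hmono : StrictMonoOn f (Ici (1 : ℝ)) := by
    apply strictMonoOn_of_deriv_pos (convex_Ici 1) hcont
    intro x hx
    rw [interior_Ici] at hx
    have hx0 : (0 : ℝ) < x := lt_trans one_pos hx
    rw [hderiv]
    have hx1 : (1:ℝ) < x := hx
    have hm : (0:ℝ) ≤ (m:ℝ) := Nat.cast_nonneg m
    have hp1 : 0 < x ^ (m + 1) := pow_pos hx0 _
    have hps : x ^ (m + 2) = x ^ (m + 1) * x := by rw [pow_succ]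
    have key : (0:ℝ) < x ^ (m+1) * (((m:ℝ)+3)*x - ((m:ℝ)+2)) :=
      mul_pos hp1 (by nlinarith)
    show (0:ℝ) < ((m:ℝ) + 3) * x ^ (m + 2) - ((m:ℝ) + 2) * x ^ (m + 1)
    nlinarith
  -- strict convexity on [1, ∞)
  have hconv : StrictConvexOn ℝ (Ici (1 : ℝ)) f := by
    apply strictConvexOn_of_deriv2_pos (convex_Ici 1) hcont
    intro x hx
    rw [interior_Ici] at hx
    have hx0 : (0 : ℝ) < x := lt_trans one_pos hx
    have h2 : deriv^[2] f x = ((m : ℝ) + 3) * (((m : ℝ) + 2) * x ^ (m + 1))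
        - ((m : ℝ) + 2) * (((m : ℝ) + 1) * x ^ m) := by
      show deriv (deriv f) x = _
      rw [hderiv]
      exact (fderiv_aux2 m x).deriv
    rw [h2]
    have hx1 : (1:ℝ) < x := hx
    have hm : (0:ℝ) ≤ (m:ℝ) := Nat.cast_nonneg m
    have hp : 0 < x ^ m := pow_pos hx0 _
    have hps : x ^ (m + 1) = x ^ m * x := by rw [pow_succ]
    have hA : ((m:ℝ)+2)*((m:ℝ)+1) < ((m:ℝ)+3)*((m:ℝ)+2) := by nlinarith
    have hAx : ((m:ℝ)+3)*((m:ℝ)+2) * 1 < ((m:ℝ)+3)*((m:ℝ)+2) * x :=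
      mul_lt_mul_of_pos_left hx1 (by nlinarith)
    have key : (0:ℝ) < x ^ m * ((((m:ℝ)+3)*((m:ℝ)+2))*x - ((m:ℝ)+2)*((m:ℝ)+1)) :=
      mul_pos hp (by linarith)
    have heq : ((m:ℝ) + 3) * (((m:ℝ) + 2) * x ^ (m + 1)) - ((m:ℝ) + 2) * (((m:ℝ) + 1) * x ^ m)
        = x ^ m * ((((m:ℝ)+3)*((m:ℝ)+2))*x - ((m:ℝ)+2)*((m:ℝ)+1)) := by
      rw [hps]; ring
    rw [heq]
    exact key
  have hqs : q < s := by
    refine (hmono.lt_iff_lt hqmem hsmem).mp ?_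
    rw [hfq, hfs]; linarith
  have hmid : f ((q + s) / 2) < f r := by
    have := hconv.2 hqmem hsmem (ne_of_lt hqs)
      (by norm_num : (0:ℝ) < 1/2) (by norm_num : (0:ℝ) < 1/2) (by norm_num)
    simp only [smul_eq_mul] at this
    have heq : 1/2 * q + 1/2 * s = (q + s) / 2 := by ring
    rw [heq] at this
    rw [hfr, hfq, hfs] at *
    linarith
  have hmidmem : (q + s) / 2 ∈ Ici (1 : ℝ) := by
    simp only [mem_Ici]; linarith
  have : (q + s) / 2 < r := (hmono.lt_iff_lt hmidmem hrmem).mp hmid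
  linarith
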